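/- (Validity of Conformalized Quantile Regression, upper bound.) Let (Ω, P) be a probability space, E a measurable space, n ∈ ℕ, and let (X_1, Y_1), …, (X_{n+1}, Y_{n+1}) be E × ℝ-valued random variables that are exchangeable. Let l, u : E → ℝ be measurable functions, α ∈ (0,1), and k = ⌈(1−α)(n+1)⌉, and assume k ≤ n. Define S_i(ω) = max{Y_i(ω) − u(X_i(ω)), l(X_i(ω)) − Y_i(ω)} for i = 1, …, n+1, and let Q̂(ω) be the k-th order statistic of the multiset {S_1(ω), …, S_n(ω)}. If moreover the scores S_1, …, S_{n+1} are almost surely pairwise distinct, i.e. P({ω : S_i(ω) = S_j(ω) for some i ≠ j}) = 0, then P({ω : l(X_{n+1}(ω)) − Q̂(ω) ≤ Y_{n+1}(ω) ≤ u(X_{n+1}(ω)) + Q̂(ω)}) ≤ 1 − α + 1/(n+1). -/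

import Mathlib

open MeasureTheory

/-- In a sorted list, if `t ≤ L[m]` then fewer than `m+1` entries are `< t`. -/
lemma cqr_sorted_countP_le {L : List ℝ} (hL : L.Pairwise (· ≤ ·)) :
    ∀ {m : ℕ} (hm : m < L.length) {t : ℝ}, t ≤ L.get ⟨m, hm⟩ →
    L.countP (fun x => decide (x < t)) ≤ m := by
  induction L with
  | nil => intro m hm; simp at hm
  | cons a L ih =>
    rw [List.pairwise_cons] at hL
    intro m hm t ht
    rcases m with _ | m
    · have h0 : ∀ x ∈ a :: L, ¬ (x < t) := by
        intro x hx
        rcases List.mem_cons.1 hx with h | h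
        · subst h; exact not_lt.2 ht
        · exact not_lt.2 (le_trans ht (hL.1 x h))
      rw [List.countP_eq_zero.2 (by intro x hx; simpa using h0 x hx)]
    · rw [List.countP_cons]
      have hm' : m < L.length := by simpa using hm
      have := ih hL.2 hm' (t := t) (by simpa using ht)
      have hsplit : (if decide (a < t) = true then 1 else 0) ≤ 1 := by split <;> simp
      omega

/-- Rank of coordinate `j` in the vector `v`. -/
noncomputable def cqrRk {m : ℕ} (v : Fin m → ℝ) (j : Fin m) : ℕ :=
  (Finset.univ.filter fun i => v i ≤ v j).card

lemma cqrRk_measurable {m : ℕ} (j : Fin m) :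
    Measurable fun v : Fin m → ℝ => cqrRk v j := by
  simp only [cqrRk, Finset.card_filter]
  exact Finset.measurable_sum _ fun i _ =>
    Measurable.ite (measurableSet_le (measurable_pi_apply i) (measurable_pi_apply j))
      measurable_const measurable_const

lemma cqrRk_comp_perm {m : ℕ} (σ : Equiv.Perm (Fin m)) (v : Fin m → ℝ) (j : Fin m) :
    cqrRk (v ∘ σ) j = cqrRk v (σ j) :=
  Finset.card_equiv σ (fun i => by simp)

lemma cqrRk_injective {m : ℕ} (v : Fin m → ℝ) (hv : ∀ i j, i ≠ j → v i ≠ v j) :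
    Function.Injective (cqrRk v) := by
  have key : ∀ i j : Fin m, v i < v j → cqrRk v i < cqrRk v j := by
    intro i j hij
    apply Finset.card_lt_card
    refine (Finset.ssubset_iff_of_subset ?_).2 ⟨j, by simp, by simp [not_le.2 hij]⟩
    intro x hx
    simp only [Finset.mem_filter, Finset.mem_univ, true_and] at hx ⊢
    exact hx.trans hij.le
  intro i j hinj
  by_contra hne
  rcases lt_trichotomy (v i) (v j) with h | h | h
  · exact absurd hinj (key i j h).ne
  · exact hv i j hne h
  · exact absurd hinj.symm (key j i h).ne

open scoped ENNReal

/-- Validity of Conformalized Quantile Regression: upper bound. -/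
theorem stmt_5 {Ω E : Type*} [MeasurableSpace Ω] [MeasurableSpace E]
    (P : Measure Ω) [IsProbabilityMeasure P] (n : ℕ)
    (X : Fin (n + 1) → Ω → E) (Y : Fin (n + 1) → Ω → ℝ)
    (hmeas : ∀ i, Measurable (fun ω => (X i ω, Y i ω)))
    (hexch : ∀ σ : Equiv.Perm (Fin (n + 1)),
      Measure.map (fun ω => fun i => (X (σ i) ω, Y (σ i) ω)) P
        = Measure.map (fun ω => fun i => (X i ω, Y i ω)) P)
    (l u : E → ℝ) (hl : Measurable l) (hu : Measurable u)
    (α : ℝ) (hα : α ∈ Set.Ioo (0 : ℝ) 1)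
    (k : ℕ) (hk : k = ⌈(1 - α) * (n + 1 : ℝ)⌉₊) (hkn : k ≤ n)
    (S : Fin (n + 1) → Ω → ℝ) (hS : ∀ i ω, S i ω = max (Y i ω - u (X i ω)) (l (X i ω) - Y i ω))
    (hdistinct : P {ω | ∃ i j : Fin (n + 1), i ≠ j ∧ S i ω = S j ω} = 0)
    (Q : Ω → ℝ)
    (hQ : ∀ ω, Q ω =
      ((Finset.univ.val.map (fun i : Fin n => S i.castSucc ω)).sort (· ≤ ·)).getD (k - 1) 0) :
    P {ω | l (X (Fin.last n) ω) - Q ω ≤ Y (Fin.last n) ω ∧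
           Y (Fin.last n) ω ≤ u (X (Fin.last n) ω) + Q ω}
      ≤ ENNReal.ofReal (1 - α + 1 / (n + 1 : ℝ)) := by
  obtain ⟨hα0, hα1⟩ := hα
  -- basic facts about k
  have hk1 : 1 ≤ k := by
    rw [hk]
    exact Nat.ceil_pos.2 (mul_pos (by linarith) (by positivity))
  -- measurability of the scores
  set f : E × ℝ → ℝ := fun p => max (p.2 - u p.1) (l p.1 - p.2) with hf_def
  have hf : Measurable f :=
    (measurable_snd.sub (hu.comp measurable_fst)).max ((hl.comp measurable_fst).sub measurable_snd)
  have hSmeas : ∀ i, Measurable (S i) := by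
    intro i
    have : S i = f ∘ (fun ω => (X i ω, Y i ω)) := by
      funext ω; simp [hS, hf_def]
    rw [this]; exact hf.comp (hmeas i)
  set V : Ω → Fin (n + 1) → ℝ := fun ω i => S i ω with hV
  have hVmeas : Measurable V := measurable_pi_lambda _ hSmeas
  -- exchangeability of the score vector
  have hexchS : ∀ σ : Equiv.Perm (Fin (n + 1)),
      Measure.map (fun ω => fun i => S (σ i) ω) P = Measure.map V P := by
    intro σ
    have hg : Measurable (fun v : Fin (n + 1) → E × ℝ => fun i => f (v i)) :=
      measurable_pi_lambda _ fun i => hf.comp (measurable_pi_apply i)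
    have h1 : (fun ω => fun i => S (σ i) ω)
        = (fun v : Fin (n + 1) → E × ℝ => fun i => f (v i))
          ∘ (fun ω => fun i => (X (σ i) ω, Y (σ i) ω)) := by
      funext ω; funext i; simp [hS, hf_def]
    have h2 : V = (fun v : Fin (n + 1) → E × ℝ => fun i => f (v i))
        ∘ (fun ω => fun i => (X i ω, Y i ω)) := by
      funext ω; funext i; simp [hV, hS, hf_def]
    rw [h1, h2, ← Measure.map_map hg (measurable_pi_lambda _ fun i => hmeas (σ i)),
      ← Measure.map_map hg (measurable_pi_lambda _ fun i => hmeas i), hexch σ]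
  have hAmeas : ∀ (r : ℕ) (j : Fin (n + 1)),
      MeasurableSet {v : Fin (n + 1) → ℝ | cqrRk v j = r} := fun r j =>
    cqrRk_measurable j (measurableSet_singleton r)
  -- the rank of coordinate j has the same law as the rank of the last coordinate
  have hperm : ∀ (r : ℕ) (j : Fin (n + 1)),
      P {ω | cqrRk (V ω) j = r} = P {ω | cqrRk (V ω) (Fin.last n) = r} := by
    intro r j
    set σ := Equiv.swap j (Fin.last n) with hσ
    have hWmeas : Measurable (fun ω => fun i => S (σ i) ω) :=
      measurable_pi_lambda _ fun i => hSmeas (σ i)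
    have e1 : {ω | cqrRk (V ω) j = r}
        = (fun ω => fun i => S (σ i) ω) ⁻¹' {v | cqrRk v (Fin.last n) = r} := by
      ext ω
      simp only [Set.mem_preimage, Set.mem_setOf_eq]
      have hc : (fun i => S (σ i) ω) = (V ω) ∘ σ := rfl
      rw [hc, cqrRk_comp_perm]
      rw [hσ, Equiv.swap_apply_right]
    rw [e1, ← Measure.map_apply hWmeas (hAmeas r (Fin.last n)), hexchS σ,
      Measure.map_apply hVmeas (hAmeas r (Fin.last n))]
    rfl
  -- the set of distinct outcomes
  set D : Set Ω := {ω | ∀ i j : Fin (n + 1), i ≠ j → S i ω ≠ S j ω} with hD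
  have hDc : P Dᶜ = 0 := by
    apply measure_mono_null _ hdistinct
    intro ω hω
    simp only [Set.mem_compl_iff, hD, Set.mem_setOf_eq] at hω
    push_neg at hω
    exact hω
  have hDmeas : MeasurableSet D := by
    have hDeq : D = ⋂ (i) (j), {ω | i ≠ j → S i ω ≠ S j ω} := by
      ext ω; simp [hD]
    rw [hDeq]
    refine MeasurableSet.iInter fun i => MeasurableSet.iInter fun j => ?_
    by_cases h : i = j
    · simp [h]
    · have he : {ω | i ≠ j → S i ω ≠ S j ω} = {ω | S i ω = S j ω}ᶜ := by
        ext ω; simp [h]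
      rw [he]
      exact (measurableSet_eq_fun (hSmeas i) (hSmeas j)).compl
  -- each rank value has probability at most 1/(n+1)
  have hA_bound : ∀ r : ℕ,
      P {ω | cqrRk (V ω) (Fin.last n) = r} ≤ ((n : ℝ≥0∞) + 1)⁻¹ := by
    intro r
    set T : Fin (n + 1) → Set Ω := fun j => {ω | cqrRk (V ω) j = r} ∩ D with hT
    have hTmeas : ∀ j, MeasurableSet (T j) := fun j =>
      (hVmeas (hAmeas r j)).inter hDmeas
    have hdisj : Set.PairwiseDisjoint ((Finset.univ : Finset (Fin (n + 1))) : Set (Fin (n + 1))) T := by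
      intro i _ j _ hij
      refine Set.disjoint_left.2 fun ω hωi hωj => hij ?_
      have hd : ∀ a b : Fin (n + 1), a ≠ b → V ω a ≠ V ω b := hωi.2
      exact cqrRk_injective (V ω) hd (hωi.1.trans hωj.1.symm)
    have hsum : ∑ j : Fin (n + 1), P (T j) ≤ 1 := by
      rw [← measure_biUnion_finset hdisj (fun j _ => hTmeas j)]
      exact prob_le_one
    have hTj : ∀ j, P (T j) = P {ω | cqrRk (V ω) (Fin.last n) = r} := by
      intro j
      have h1 : P (T j) = P {ω | cqrRk (V ω) j = r} := by
        refine le_antisymm (measure_mono Set.inter_subset_left) ?_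
        calc P {ω | cqrRk (V ω) j = r}
            ≤ P (T j ∪ Dᶜ) := by
              refine measure_mono fun ω hω => ?_
              by_cases hωD : ω ∈ D
              · exact Or.inl ⟨hω, hωD⟩
              · exact Or.inr hωD
          _ ≤ P (T j) + P Dᶜ := measure_union_le _ _
          _ = P (T j) := by rw [hDc, add_zero]
      rw [h1, hperm r j]
    have hmul : ((n : ℝ≥0∞) + 1) * P {ω | cqrRk (V ω) (Fin.last n) = r} ≤ 1 := by
      calc ((n : ℝ≥0∞) + 1) * P {ω | cqrRk (V ω) (Fin.last n) = r}
          = ∑ j : Fin (n + 1), P (T j) := by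
            rw [Finset.sum_congr rfl (fun j _ => hTj j), Finset.sum_const, Finset.card_univ,
              Fintype.card_fin, nsmul_eq_mul]
            push_cast
            ring
        _ ≤ 1 := hsum
    rw [ENNReal.le_inv_iff_mul_le, mul_comm]
    exact hmul
  -- the coverage event, intersected with D, is contained in {rank ≤ k}
  have hincl : {ω | l (X (Fin.last n) ω) - Q ω ≤ Y (Fin.last n) ω ∧
        Y (Fin.last n) ω ≤ u (X (Fin.last n) ω) + Q ω} ∩ D
      ⊆ ⋃ r ∈ Finset.Icc 1 k, {ω | cqrRk (V ω) (Fin.last n) = r} := by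
    rintro ω ⟨hωE, hωD⟩
    simp only [Set.mem_iUnion, Set.mem_setOf_eq, exists_prop]
    refine ⟨cqrRk (V ω) (Fin.last n), ?_, rfl⟩
    rw [Finset.mem_Icc]
    have hωD' : ∀ a b : Fin (n + 1), a ≠ b → S a ω ≠ S b ω := hωD
    constructor
    · exact Finset.card_pos.2 ⟨Fin.last n, by simp [cqrRk]⟩
    · -- rank ≤ k
      set t : ℝ := S (Fin.last n) ω with ht_def
      have hSQ : t ≤ Q ω := by
        rw [ht_def, hS]
        exact max_le (by linarith [hωE.2]) (by linarith [hωE.1])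
      set M : Multiset ℝ := Finset.univ.val.map (fun i : Fin n => S i.castSucc ω) with hM
      set L : List ℝ := M.sort (· ≤ ·) with hL
      have hlen : L.length = n := by
        rw [hL, Multiset.length_sort, hM]
        simp
      have hk1n : k - 1 < L.length := by
        rw [hlen]; omega
      have hQω : Q ω = L.get ⟨k - 1, hk1n⟩ := by
        rw [hQ]; exact List.getD_eq_getElem (hn := hk1n) ..
      have hsorted : L.Pairwise (· ≤ ·) := Multiset.pairwise_sort _ _
      have hcountL : L.countP (fun x => decide (x < t)) ≤ k - 1 :=
        cqr_sorted_countP_le hsorted hk1n (hQω ▸ hSQ)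
      have hcountM : M.countP (fun x => x < t) ≤ k - 1 := by
        rw [← Multiset.sort_eq (s := M) (r := (· ≤ ·)), Multiset.coe_countP, ← hL]
        exact hcountL
      have hcount : (Finset.univ.filter fun i : Fin n => S i.castSucc ω < t).card ≤ k - 1 := by
        rw [hM, Multiset.countP_map] at hcountM
        exact hcountM
      have hsplit : cqrRk (V ω) (Fin.last n)
          = (Finset.univ.filter fun i : Fin n => S i.castSucc ω ≤ t).card + 1 := by
        rw [cqrRk, Finset.card_filter, Fin.sum_univ_castSucc, Finset.card_filter]
        simp only [hV]
        rw [if_pos le_rfl]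
      have hflt : (Finset.univ.filter fun i : Fin n => S i.castSucc ω ≤ t)
          = (Finset.univ.filter fun i : Fin n => S i.castSucc ω < t) := by
        apply Finset.filter_congr
        intro i _
        have hne : S i.castSucc ω ≠ t :=
          hωD' i.castSucc (Fin.last n) (Fin.castSucc_lt_last i).ne
        exact ⟨fun h => h.lt_of_ne hne, le_of_lt⟩
      rw [hsplit, hflt]
      omega
  -- put everything together
  have hfin : P {ω | l (X (Fin.last n) ω) - Q ω ≤ Y (Fin.last n) ω ∧
        Y (Fin.last n) ω ≤ u (X (Fin.last n) ω) + Q ω}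
      ≤ (k : ℝ≥0∞) * ((n : ℝ≥0∞) + 1)⁻¹ := by
    calc P {ω | l (X (Fin.last n) ω) - Q ω ≤ Y (Fin.last n) ω ∧
          Y (Fin.last n) ω ≤ u (X (Fin.last n) ω) + Q ω}
        ≤ P ({ω | l (X (Fin.last n) ω) - Q ω ≤ Y (Fin.last n) ω ∧
          Y (Fin.last n) ω ≤ u (X (Fin.last n) ω) + Q ω} ∩ D) + P Dᶜ := by
          refine (measure_mono fun ω hω => ?_).trans (measure_union_le _ _)
          by_cases hωD : ω ∈ D
          · exact Or.inl ⟨hω, hωD⟩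
          · exact Or.inr hωD
      _ = P ({ω | l (X (Fin.last n) ω) - Q ω ≤ Y (Fin.last n) ω ∧
          Y (Fin.last n) ω ≤ u (X (Fin.last n) ω) + Q ω} ∩ D) := by rw [hDc, add_zero]
      _ ≤ P (⋃ r ∈ Finset.Icc 1 k, {ω | cqrRk (V ω) (Fin.last n) = r}) := measure_mono hincl
      _ ≤ ∑ r ∈ Finset.Icc 1 k, P {ω | cqrRk (V ω) (Fin.last n) = r} :=
          measure_biUnion_finset_le _ _
      _ ≤ ∑ _r ∈ Finset.Icc 1 k, ((n : ℝ≥0∞) + 1)⁻¹ :=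
          Finset.sum_le_sum fun r _ => hA_bound r
      _ = (k : ℝ≥0∞) * ((n : ℝ≥0∞) + 1)⁻¹ := by
          rw [Finset.sum_const, Nat.card_Icc, Nat.add_sub_cancel, nsmul_eq_mul]
  refine hfin.trans ?_
  have hn1 : (0 : ℝ) < (n : ℝ) + 1 := by positivity
  have h1 : (k : ℝ≥0∞) * ((n : ℝ≥0∞) + 1)⁻¹ = ENNReal.ofReal ((k : ℝ) / ((n : ℝ) + 1)) := by
    rw [ENNReal.ofReal_div_of_pos hn1, div_eq_mul_inv]
    congr 1
    · exact (ENNReal.ofReal_natCast k).symm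
    · congr 1
      rw [show ((n : ℝ) + 1) = ((n + 1 : ℕ) : ℝ) by push_cast; ring, ENNReal.ofReal_natCast]
      push_cast; ring
  have h2 : (k : ℝ) / ((n : ℝ) + 1) ≤ 1 - α + 1 / ((n : ℝ) + 1) := by
    have hceil : (k : ℝ) < (1 - α) * ((n : ℝ) + 1) + 1 := by
      rw [hk]
      have := Nat.ceil_lt_add_one
        (le_of_lt (mul_pos (by linarith : (0:ℝ) < 1 - α) (by positivity : (0:ℝ) < (n:ℝ)+1)))
      push_cast at this ⊢
      convert this using 2
    rw [div_le_iff₀ hn1]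
    have hx : (1 - α + 1 / ((n : ℝ) + 1)) * ((n : ℝ) + 1) = (1 - α) * ((n : ℝ) + 1) + 1 := by
      field_simp
    linarith
  rw [h1]
  exact ENNReal.ofReal_le_ofReal h2
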